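/- Fix N : ℕ and let S = EuclideanSpace ℝ (Fin N). Let κ be a Markov kernel from S to S, let F : ℕ → S → ℝ, and let L ≥ 0, C ≥ 0 and γ ≥ 0 be real constants with γ * C < 1. Denote by e i the i-th standard basis vector of S. Assume that for every s ∈ S, ‖fderiv ℝ (F 0) s‖ ≤ L, and that for every i : Fin N, k ∈ ℕ and s ∈ S, |fderiv ℝ (F (k+1)) s (e i)| ≤ C * ∫ |fderiv ℝ (F k) x (e i)| ∂(κ s). Let Q : S → ℝ be a function whose partial derivatives can be computed term by term, i.e., for every s ∈ S and every i : Fin N, fderiv ℝ Q s (e i) = ∑' (k : ℕ), γ^k * fderiv ℝ (F k) s (e i). Then for every s ∈ S, ‖fderiv ℝ Q s‖ ≤ Real.sqrt N * L / (1 - γ * C). (This is Theorem 1 of the paper: under the coordinatewise recursive condition, the gradient of the optimal Q-function Q(s) = Σ_k γ^k E[r(s_{t+k}) | s_t = s] has norm at most √N · L · Σ_k (γC)^k.) -/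

import Mathlib

set_option maxHeartbeats 1000000

open MeasureTheory ProbabilityTheory

theorem stmt_4 (N : ℕ)
    (κ : Kernel (EuclideanSpace ℝ (Fin N)) (EuclideanSpace ℝ (Fin N)))
    [IsMarkovKernel κ]
    (F : ℕ → EuclideanSpace ℝ (Fin N) → ℝ) (L C γ : ℝ)
    (hL : 0 ≤ L) (hC : 0 ≤ C) (hγ : 0 ≤ γ) (hγC : γ * C < 1)
    (hbase : ∀ s : EuclideanSpace ℝ (Fin N), ‖fderiv ℝ (F 0) s‖ ≤ L)
    (hrec : ∀ (i : Fin N) (k : ℕ) (s : EuclideanSpace ℝ (Fin N)),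
      |fderiv ℝ (F (k + 1)) s (EuclideanSpace.basisFun (Fin N) ℝ i)| ≤
        C * ∫ x, |fderiv ℝ (F k) x (EuclideanSpace.basisFun (Fin N) ℝ i)| ∂(κ s))
    (Q : EuclideanSpace ℝ (Fin N) → ℝ)
    (hQ : ∀ (s : EuclideanSpace ℝ (Fin N)) (i : Fin N),
      fderiv ℝ Q s (EuclideanSpace.basisFun (Fin N) ℝ i) =
        ∑' (k : ℕ), γ ^ k * fderiv ℝ (F k) s (EuclideanSpace.basisFun (Fin N) ℝ i)) :
    ∀ s : EuclideanSpace ℝ (Fin N),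
      ‖fderiv ℝ Q s‖ ≤ Real.sqrt N * L / (1 - γ * C) := by
  intro s
  set e := EuclideanSpace.basisFun (Fin N) ℝ with he
  have h1γC : (0:ℝ) < 1 - γ * C := by linarith
  have hnorm_e : ∀ i, ‖(e i : EuclideanSpace ℝ (Fin N))‖ = 1 := fun i =>
    (e.orthonormal.1 i)
  -- coordinatewise bound by induction
  have key : ∀ (k : ℕ) (t : EuclideanSpace ℝ (Fin N)) (i : Fin N),
      |fderiv ℝ (F k) t (e i)| ≤ C ^ k * L := by
    intro k
    induction k with
    | zero =>
      intro t i
      calc |fderiv ℝ (F 0) t (e i)| ≤ ‖fderiv ℝ (F 0) t‖ * ‖(e i : EuclideanSpace ℝ (Fin N))‖ := by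
            simpa using (fderiv ℝ (F 0) t).le_opNorm (e i)
        _ ≤ L := by rw [hnorm_e]; simpa using hbase t
        _ = C ^ 0 * L := by ring
    | succ k ih =>
      intro t i
      have hmeas : Measurable fun x => |fderiv ℝ (F k) x (e i)| :=
        (measurable_fderiv_apply_const ℝ (F k) (e i)).abs
      have hint : Integrable (fun x => |fderiv ℝ (F k) x (e i)|) (κ t) := by
        refine Integrable.mono' (integrable_const (C ^ k * L)) hmeas.aestronglyMeasurable ?_
        exact ae_of_all _ fun x => by simpa [abs_abs] using ih x i
      calc |fderiv ℝ (F (k + 1)) t (e i)|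
          ≤ C * ∫ x, |fderiv ℝ (F k) x (e i)| ∂(κ t) := hrec i k t
        _ ≤ C * (C ^ k * L) := by
            refine mul_le_mul_of_nonneg_left ?_ hC
            calc ∫ x, |fderiv ℝ (F k) x (e i)| ∂(κ t)
                ≤ ∫ _, C ^ k * L ∂(κ t) :=
                  integral_mono hint (integrable_const _) fun x => ih x i
              _ = C ^ k * L := by simp
        _ = C ^ (k + 1) * L := by ring
  -- bound on coordinates of the gradient of Q
  have hsum_geom : Summable fun k : ℕ => (γ * C) ^ k * L :=
    (summable_geometric_of_lt_one (by positivity) hγC).mul_right L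
  have hcoord : ∀ i, |fderiv ℝ Q s (e i)| ≤ L / (1 - γ * C) := by
    intro i
    rw [hQ s i, ← Real.norm_eq_abs]
    have habs : ∀ k : ℕ, |γ ^ k * fderiv ℝ (F k) s (e i)| ≤ (γ * C) ^ k * L := by
      intro k
      rw [abs_mul, abs_pow, abs_of_nonneg hγ, mul_pow]
      calc γ ^ k * |fderiv ℝ (F k) s (e i)| ≤ γ ^ k * (C ^ k * L) :=
            mul_le_mul_of_nonneg_left (key k s i) (by positivity)
        _ = γ ^ k * C ^ k * L := by ring
    have hsa : Summable fun k : ℕ => |γ ^ k * fderiv ℝ (F k) s (e i)| :=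
      Summable.of_nonneg_of_le (fun k => abs_nonneg _) habs hsum_geom
    calc ‖∑' k : ℕ, γ ^ k * fderiv ℝ (F k) s (e i)‖
        ≤ ∑' k : ℕ, ‖γ ^ k * fderiv ℝ (F k) s (e i)‖ :=
          norm_tsum_le_tsum_norm (by simp only [Real.norm_eq_abs]; exact hsa)
      _ ≤ ∑' k : ℕ, (γ * C) ^ k * L :=
          Summable.tsum_le_tsum (fun k => by rw [Real.norm_eq_abs]; exact habs k)
            (by simp only [Real.norm_eq_abs]; exact hsa) hsum_geom
      _ = (1 - γ * C)⁻¹ * L := by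
          rw [tsum_mul_right, tsum_geometric_of_lt_one (by positivity) hγC]
      _ = L / (1 - γ * C) := by ring
  -- from coordinate bounds to operator norm
  set M := L / (1 - γ * C) with hM
  have hM0 : 0 ≤ M := div_nonneg hL h1γC.le
  have hop : ‖fderiv ℝ Q s‖ ≤ Real.sqrt N * M := by
    refine (fderiv ℝ Q s).opNorm_le_bound (by positivity) fun x => ?_
    have hx : fderiv ℝ Q s x = ∑ i, x i * fderiv ℝ Q s (e i) := by
      conv_lhs => rw [← e.sum_repr x]
      simp [he, EuclideanSpace.basisFun_repr, mul_comm]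
    rw [hx]
    have hsum_abs : ∑ i, |x i| ≤ Real.sqrt N * ‖x‖ := by
      have := real_inner_le_norm (F := EuclideanSpace ℝ (Fin N))
        ((WithLp.equiv 2 (Fin N → ℝ)).symm fun _ => 1)
        ((WithLp.equiv 2 (Fin N → ℝ)).symm fun i => |x i|)
      have h1 : (inner ℝ ((WithLp.equiv 2 (Fin N → ℝ)).symm fun _ => 1)
          ((WithLp.equiv 2 (Fin N → ℝ)).symm fun i => |x i|) : ℝ) = ∑ i, |x i| := by
        simp [PiLp.inner_apply]
      have h2 : ‖((WithLp.equiv 2 (Fin N → ℝ)).symm fun _ => 1)‖ = Real.sqrt N := by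
        simp [EuclideanSpace.norm_eq]
      have h3 : ‖((WithLp.equiv 2 (Fin N → ℝ)).symm fun i => |x i|)‖ = ‖x‖ := by
        simp [EuclideanSpace.norm_eq, sq_abs]
      rw [h1, h2, h3] at this
      exact this
    calc ‖∑ i, x i * fderiv ℝ Q s (e i)‖ ≤ ∑ i, ‖x i * fderiv ℝ Q s (e i)‖ :=
          norm_sum_le _ _
      _ ≤ ∑ i, |x i| * M := by
          refine Finset.sum_le_sum fun i _ => ?_
          rw [Real.norm_eq_abs, abs_mul]
          exact mul_le_mul_of_nonneg_left (hcoord i) (abs_nonneg _)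
      _ = (∑ i, |x i|) * M := by rw [Finset.sum_mul]
      _ ≤ (Real.sqrt N * ‖x‖) * M := mul_le_mul_of_nonneg_right hsum_abs hM0
      _ = Real.sqrt N * M * ‖x‖ := by ring
  calc ‖fderiv ℝ Q s‖ ≤ Real.sqrt N * M := hop
    _ = Real.sqrt N * L / (1 - γ * C) := by rw [hM]; ring
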